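/- Let M = {z ∈ ℂ⁴ : Re z₄ + |z₁² − z₂z₃|² + |z₂|⁴ = 0} and let γ(t) = (t, −(a/b)t, 0, 0) for nonzero complex constants a, b. Then the order of vanishing at t = 0 of r ∘ γ, where r(z) = Re z₄ + |z₁² − z₂z₃|² + |z₂|⁴, equals 4, and γ is contained in the hyperplane {a z₁ + b z₂ + c z₃ + z₄ = 0} for any c. -/

import Mathlib

open Filter Asymptotics Topology

/-- The order of vanishing at `0` of a function `f : ℂ → E`: the supremum of all `k`
such that `f(t) = O(‖t‖^k)` as `t → 0`. -/
noncomputable def vord {E : Type*} [NormedAddCommGroup E] (f : ℂ → E) : ℕ∞ :=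
  sSup {m : ℕ∞ | ∃ k : ℕ, m = (k : ℕ∞) ∧ f =O[nhds (0 : ℂ)] fun t => ‖t‖ ^ k}

/-- For `r(z) = Re z₄ + |z₁² − z₂z₃|² + |z₂|⁴` on `ℂ⁴` and the curve
`γ(t) = (t, −(a/b)t, 0, 0)` with `a, b ≠ 0`, the order of vanishing of `r ∘ γ` at `0` is `4`,
and `γ` lies in the hyperplane `{a z₁ + b z₂ + c z₃ + z₄ = 0}` for every `c`. -/
theorem example_curve_type_four (a b : ℂ) (ha : a ≠ 0) (hb : b ≠ 0)
    (r : (Fin 4 → ℂ) → ℝ)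
    (hr : ∀ z, r z = (z 3).re + ‖z 0 ^ 2 - z 1 * z 2‖ ^ 2
      + ‖z 1‖ ^ 4)
    (γ : ℂ → (Fin 4 → ℂ)) (hγ : ∀ t, γ t = ![t, -(a / b) * t, 0, 0]) :
    vord (fun t => (r (γ t) : ℝ)) = 4 ∧
      ∀ c t, a * γ t 0 + b * γ t 1 + c * γ t 2 + γ t 3 = 0 := by
  obtain ⟨C, hC⟩ : ∃ C : ℝ, C = 1 + ‖a / b‖ ^ 4 := ⟨_, rfl⟩
  have hCpos : 0 < C := by rw [hC]; positivity
  have hf : ∀ t, r (γ t) = C * ‖t‖ ^ 4 := by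
    intro t
    rw [hr]
    rw [hC]
    simp [hγ, map_mul, map_pow, mul_pow]
    ring
  constructor
  · apply le_antisymm
    · apply sSup_le
      rintro m ⟨k, rfl, hO⟩
      by_contra hk4
      push_neg at hk4
      have hk : 5 ≤ k := by
        by_contra h
        push_neg at h
        interval_cases k <;> simp_all <;> norm_num at hk4
      obtain ⟨c, hc, hbd⟩ := hO.exists_pos
      rw [isBigOWith_iff] at hbd
      rw [Metric.eventually_nhds_iff] at hbd
      obtain ⟨δ, hδ, hb2⟩ := hbd
      set x : ℝ := min (δ/2) (min 1 (C/(2*c))) with hx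
      have hxpos : 0 < x := by positivity
      have hxδ : x < δ := lt_of_le_of_lt (min_le_left _ _) (by linarith)
      have hx1 : x ≤ 1 := le_trans (min_le_right _ _) (min_le_left _ _)
      have hxc : x ≤ C/(2*c) := le_trans (min_le_right _ _) (min_le_right _ _)
      have hnx : ‖(x:ℂ)‖ = x := by
        simp [Complex.norm_real, abs_of_pos hxpos]
      have hbx : ‖r (γ (x:ℂ))‖ ≤ c * ‖‖(x:ℂ)‖ ^ k‖ := by
        apply hb2
        simp only [dist_zero_right, hnx]
        exact hxδ
      rw [hf, hnx] at hbx
      have h1 : ‖C * x ^ 4‖ = C * x ^ 4 := abs_of_pos (by positivity)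
      have h2 : ‖x ^ k‖ = x ^ k := abs_of_pos (by positivity)
      rw [h1, h2] at hbx
      have h3 : x ^ k ≤ x ^ 5 := pow_le_pow_of_le_one (le_of_lt hxpos) hx1 hk
      have h4 : C * x ^ 4 ≤ c * x ^ 5 := le_trans hbx (by nlinarith)
      have h5 : c * x ^ 5 = (c * x) * x ^ 4 := by ring
      have h6 : c * x ≤ C / 2 := by
        calc c * x ≤ c * (C/(2*c)) := mul_le_mul_of_nonneg_left hxc hc.le
        _ = C / 2 := by field_simp
      have h7 : C * x ^ 4 ≤ (C / 2) * x ^ 4 := by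
        calc C * x ^ 4 ≤ c * x * x ^ 4 := by rw [← h5]; exact h4
        _ ≤ (C / 2) * x ^ 4 := mul_le_mul_of_nonneg_right h6 (pow_pos hxpos 4).le
      have h8 : C ≤ C / 2 := (mul_le_mul_iff_of_pos_right (pow_pos hxpos 4)).mp h7
      linarith
    · apply le_sSup
      refine ⟨4, rfl, ?_⟩
      apply IsBigO.of_bound C
      filter_upwards with t
      rw [hf]
      have : (0:ℝ) ≤ ‖t‖ ^ 4 := by positivity
      rw [Real.norm_eq_abs, Real.norm_eq_abs, abs_of_nonneg (by positivity),
        abs_of_nonneg this]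
  · intro c t
    simp [hγ]
    field_simp
    ring
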